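/- Let H be a connected r-uniform hypergraph (r ≥ 2) with diameter D, and let H' = H − e be a connected sub-hypergraph obtained by deleting one edge e of H. Then diam(H') ≤ r(D+1). -/
import Mathlib


/-- `hconn E k u v` : there is a walk of length `k` from `u` to `v` in the hypergraph
with edge set `E`, i.e. an alternating sequence of vertices and edges where consecutive
vertices both lie in the connecting edge. -/
def hconn {n : ℕ} (E : Finset (Finset (Fin n))) : ℕ → Fin n → Fin n → Prop
  | 0, u, v => u = v
  | k + 1, u, v => ∃ e ∈ E, ∃ w ∈ e, u ∈ e ∧ hconn E k w v

/-- Distance between two vertices of a hypergraph: minimum length of a connecting walk. -/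
noncomputable def hdist {n : ℕ} (E : Finset (Finset (Fin n))) (u v : Fin n) : ℕ :=
  sInf {k | hconn E k u v}

/-- Diameter of a hypergraph: maximum distance between two vertices. -/
noncomputable def hdiam {n : ℕ} (E : Finset (Finset (Fin n))) : ℕ :=
  sSup {d | ∃ u v : Fin n, hdist E u v = d}

/-- A hypergraph is connected if any two vertices are joined by a walk. -/
def HConnected {n : ℕ} (E : Finset (Finset (Fin n))) : Prop :=
  ∀ u v : Fin n, ∃ k, hconn E k u v

/-- Degree of a vertex: the number of edges containing it. -/
def hdeg {n : ℕ} (E : Finset (Finset (Fin n))) (v : Fin n) : ℕ :=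
  (E.filter (fun e => v ∈ e)).card

lemma hconn_trans {n : ℕ} {E : Finset (Finset (Fin n))} :
    ∀ {a b : ℕ} {u w v : Fin n}, hconn E a u w → hconn E b w v → hconn E (a + b) u v := by
  intro a
  induction a with
  | zero => intro b u w v h h'; cases h; simpa using h'
  | succ a ih =>
    intro b u w v h h'
    obtain ⟨f, hf, w', hw', hu, hw2⟩ := h
    exact (Nat.succ_add a b) ▸ ⟨f, hf, w', hw', hu, ih hw2 h'⟩

lemma hconn_single {n : ℕ} {E : Finset (Finset (Fin n))} {f : Finset (Fin n)} {a b : Fin n}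
    (hf : f ∈ E) (ha : a ∈ f) (hb : b ∈ f) : hconn E 1 a b :=
  ⟨f, hf, b, hb, ha, rfl⟩

lemma hconn_symm {n : ℕ} {E : Finset (Finset (Fin n))} :
    ∀ {k : ℕ} {u v : Fin n}, hconn E k u v → hconn E k v u := by
  intro k
  induction k with
  | zero => intro u v h; exact h.symm
  | succ k ih =>
    intro u v h
    obtain ⟨f, hf, w, hwf, huf, hw⟩ := h
    exact hconn_trans (ih hw) (hconn_single hf hwf huf)

lemma hdist_le {n : ℕ} {E : Finset (Finset (Fin n))} {k : ℕ} {u v : Fin n}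
    (h : hconn E k u v) : hdist E u v ≤ k :=
  Nat.sInf_le h

lemma hconn_surgery {n : ℕ} {E : Finset (Finset (Fin n))} {e : Finset (Fin n)} :
    ∀ {k : ℕ} {u v : Fin n}, hconn E k u v →
      hconn (E.erase e) k u v ∨
      ∃ a ∈ e, ∃ b ∈ e, ∃ k1 k2 : ℕ, k1 + k2 + 1 ≤ k ∧
        hconn (E.erase e) k1 u a ∧ hconn (E.erase e) k2 b v := by
  intro k
  induction k with
  | zero => intro u v h; exact Or.inl h
  | succ k ih =>
    intro u v h
    obtain ⟨f, hf, w, hwf, huf, hw⟩ := h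
    rcases ih hw with h' | ⟨a, ha, b, hb, k1, k2, hk, h1, h2⟩
    · by_cases hfe : f = e
      · subst hfe
        exact Or.inr ⟨u, huf, w, hwf, 0, k, by omega, rfl, h'⟩
      · exact Or.inl ⟨f, Finset.mem_erase.2 ⟨hfe, hf⟩, w, hwf, huf, h'⟩
    · by_cases hfe : f = e
      · subst hfe
        exact Or.inr ⟨u, huf, b, hb, 0, k2, by omega, rfl, h2⟩
      · exact Or.inr ⟨a, ha, b, hb, k1 + 1, k2, by omega,
          ⟨f, Finset.mem_erase.2 ⟨hfe, hf⟩, w, hwf, huf, h1⟩, h2⟩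

lemma hconn_walk {n : ℕ} {E : Finset (Finset (Fin n))} :
    ∀ {k : ℕ} {u v : Fin n}, hconn E k u v →
      ∃ x : ℕ → Fin n, x 0 = u ∧ x k = v ∧ ∀ i < k, hconn E 1 (x i) (x (i + 1)) := by
  intro k
  induction k with
  | zero => intro u v h; exact ⟨fun _ => u, rfl, h ▸ rfl, by omega⟩
  | succ k ih =>
    intro u v h
    obtain ⟨f, hf, w, hwf, huf, hw⟩ := h
    obtain ⟨y, hy0, hyk, hys⟩ := ih hw
    refine ⟨fun i => if i = 0 then u else y (i - 1), by simp, by simp [hyk], ?_⟩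
    intro i hi
    match i with
    | 0 => simpa [hy0] using hconn_single hf huf hwf
    | (j + 1) => simpa using hys j (by omega)

lemma hconn_seg {n : ℕ} {E : Finset (Finset (Fin n))} {x : ℕ → Fin n} {M : ℕ}
    (hx : ∀ i < M, hconn E 1 (x i) (x (i + 1))) :
    ∀ d i, i + d ≤ M → hconn E d (x i) (x (i + d)) := by
  intro d
  induction d with
  | zero => intro i _; rfl
  | succ d ihd =>
    intro i hi
    have h1 : hconn E 1 (x i) (x (i + 1)) := hx i (by omega)
    have h2 : hconn E d (x (i + 1)) (x (i + 1 + d)) := ihd (i + 1) (by omega)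
    have := hconn_trans h1 h2
    have e1 : 1 + d = d + 1 := by omega
    have e2 : i + 1 + d = i + (d + 1) := by omega
    rwa [e1, e2] at this

theorem stmt_12 (n r : ℕ) (hr : 2 ≤ r) (E : Finset (Finset (Fin n)))
    (hu : ∀ e ∈ E, e.card = r) (hc : HConnected E) (D : ℕ) (hD : hdiam E = D)
    (e : Finset (Fin n)) (he : e ∈ E) (hc' : HConnected (E.erase e)) :
    hdiam (E.erase e) ≤ r * (D + 1) := by
  classical
  set E' := E.erase e with hE'
  rcases Nat.eq_zero_or_pos n with hn | hn
  · subst hn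
    have hempty : {d | ∃ u v : Fin 0, hdist E' u v = d} = ∅ := by
      ext d
      simp only [Set.mem_setOf_eq, Set.mem_empty_iff_false, iff_false]
      rintro ⟨u, -⟩
      exact u.elim0
    show sSup {d | ∃ u v : Fin 0, hdist E' u v = d} ≤ r * (D + 1)
    rw [hempty, csSup_empty]
    exact Nat.zero_le _
  have hDub : ∀ a b : Fin n, hdist E a b ≤ D := by
    intro a b
    have hsub : {d | ∃ u v : Fin n, hdist E u v = d} ⊆
        Set.range (fun p : Fin n × Fin n => hdist E p.1 p.2) := by
      rintro d ⟨u, v, h⟩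
      exact ⟨(u, v), h⟩
    have hbdd : BddAbove {d | ∃ u v : Fin n, hdist E u v = d} :=
      ((Set.finite_range _).subset hsub).bddAbove
    have hle : hdist E a b ≤ hdiam E := le_csSup hbdd ⟨a, b, rfl⟩
    rwa [hD] at hle
  have key : ∀ u v : Fin n, hdist E' u v ≤ r * (D + 1) := by
    intro u v
    by_contra hM
    push_neg at hM
    set M := hdist E' u v with hMdef
    have hwalkM : hconn E' M u v := Nat.sInf_mem (hc' u v)
    obtain ⟨x, hx0, hxM, hxs⟩ := hconn_walk hwalkM
    have seg : ∀ i j, i ≤ j → j ≤ M → hconn E' (j - i) (x i) (x j) := by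
      intro i j hij hjM
      have h := hconn_seg hxs (j - i) i (by omega)
      rwa [show i + (j - i) = j by omega] at h
    have low : ∀ i j ℓ, i ≤ j → j ≤ M → hconn E' ℓ (x i) (x j) → j - i ≤ ℓ := by
      intro i j ℓ hij hjM hℓ
      have w1 : hconn E' i u (x i) := by
        have := seg 0 i (by omega) (by omega)
        rwa [hx0, Nat.sub_zero] at this
      have w2 : hconn E' (M - j) (x j) v := by
        have := seg j M hjM le_rfl
        rwa [hxM] at this
      have hfull : hconn E' (i + (ℓ + (M - j))) u v := hconn_trans w1 (hconn_trans hℓ w2)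
      have := hdist_le hfull
      omega
    have hrM : r * (D + 1) ≤ M := le_of_lt hM
    have x0 : Fin n := ⟨0, hn⟩
    have H : ∀ j : ℕ, ∃ A B : Fin n, ∃ α β : ℕ, j < r →
        A ∈ e ∧ B ∈ e ∧ α + β + 1 ≤ D ∧
        hconn E' α (x (j * (D + 1))) A ∧ hconn E' β B (x ((j + 1) * (D + 1))) := by
      intro j
      by_cases hjr : j < r
      · have hj1 : (j + 1) * (D + 1) ≤ M :=
          le_trans (Nat.mul_le_mul_right _ (by omega)) hrM
        have hj0 : j * (D + 1) ≤ (j + 1) * (D + 1) := Nat.mul_le_mul_right _ (by omega)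
        have hgap : (j + 1) * (D + 1) - j * (D + 1) = D + 1 := by
          rw [Nat.add_mul, one_mul]
          omega
        have hDk : hdist E (x (j * (D + 1))) (x ((j + 1) * (D + 1))) ≤ D := hDub _ _
        have hwE : hconn E (hdist E (x (j * (D + 1))) (x ((j + 1) * (D + 1))))
            (x (j * (D + 1))) (x ((j + 1) * (D + 1))) := Nat.sInf_mem (hc _ _)
        rcases hconn_surgery hwE with h' | ⟨A, hA, B, hB, k1, k2, hk, h1, h2⟩
        · exfalso
          have := low _ _ _ hj0 hj1 h'
          omega
        · exact ⟨A, B, k1, k2, fun _ => ⟨hA, hB, by omega, h1, h2⟩⟩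
      · exact ⟨x0, x0, 0, 0, fun h => absurd h hjr⟩
    choose A B α β hAB using H
    set g : ℕ → ℕ := fun j =>
      if j = 0 then α 0 else if j = r then β (r - 1) else min (α j) (β (j - 1)) with hg
    set c : ℕ → Fin n := fun j =>
      if j = 0 then A 0 else if j = r then B (r - 1)
      else if α j ≤ β (j - 1) then A j else B (j - 1) with hcdef
    have prop : ∀ j ≤ r, c j ∈ e ∧ g j + 1 ≤ D ∧
        hconn E' (g j) (x (j * (D + 1))) (c j) := by
      intro j hj
      rcases eq_or_ne j 0 with h0 | h0
      · subst h0
        obtain ⟨h1, h2, h3, h4, h5⟩ := hAB 0 (by omega)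
        refine ⟨?_, ?_, ?_⟩ <;> simp only [hg, hcdef, if_pos rfl]
        · exact h1
        · omega
        · exact h4
      · rcases eq_or_ne j r with hjr | hjr
        · obtain ⟨h1, h2, h3, h4, h5⟩ := hAB (r - 1) (by omega)
          rw [show r - 1 + 1 = r by omega] at h5
          refine ⟨?_, ?_, ?_⟩ <;> simp only [hg, hcdef, if_neg h0, if_pos hjr]
          · exact h2
          · omega
          · rw [hjr]; exact hconn_symm h5
        · have hjlt : j < r := lt_of_le_of_ne hj hjr
          obtain ⟨h1, h2, h3, h4, h5⟩ := hAB j hjlt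
          obtain ⟨h1', h2', h3', h4', h5'⟩ := hAB (j - 1) (by omega)
          rw [show j - 1 + 1 = j by omega] at h5'
          by_cases hmin : α j ≤ β (j - 1)
          · refine ⟨?_, ?_, ?_⟩ <;>
              simp only [hg, hcdef, if_neg h0, if_neg hjr, if_pos hmin, min_eq_left hmin]
            · exact h1
            · omega
            · exact h4
          · have hmin' : β (j - 1) ≤ α j := le_of_not_ge hmin
            refine ⟨?_, ?_, ?_⟩ <;>
              simp only [hg, hcdef, if_neg h0, if_neg hjr, if_neg hmin, min_eq_right hmin']
            · exact h2'
            · omega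
            · exact hconn_symm h5'
    have pp : ∀ j < r, g j + g (j + 1) + 1 ≤ D := by
      intro j hjlt
      obtain ⟨h1, h2, h3, h4, h5⟩ := hAB j hjlt
      have e1 : g j ≤ α j := by
        rcases eq_or_ne j 0 with h0 | h0
        · subst h0; simp [hg]
        · simp only [hg, if_neg h0, if_neg (show j ≠ r by omega)]
          exact min_le_left _ _
      have e2 : g (j + 1) ≤ β j := by
        rcases eq_or_ne (j + 1) r with hx | hx
        · simp only [hg, if_neg (show j + 1 ≠ 0 by omega), if_pos hx]
          rw [show r - 1 = j by omega]
        · simp only [hg, if_neg (show j + 1 ≠ 0 by omega), if_neg hx,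
            Nat.add_sub_cancel]
          exact min_le_right _ _
      omega
    have main : ∀ j k, j < k → k ≤ r → c j = c k → False := by
      intro j k hlt hkr hceq
      have hjr : j ≤ r := by omega
      obtain ⟨-, pdj, pfj⟩ := prop j hjr
      obtain ⟨-, pdk, pfk⟩ := prop k hkr
      have tkM : k * (D + 1) ≤ M := le_trans (Nat.mul_le_mul_right _ hkr) hrM
      have tj : j * (D + 1) ≤ k * (D + 1) := Nat.mul_le_mul_right _ (by omega)
      have w : hconn E' (g j + g k) (x (j * (D + 1))) (x (k * (D + 1))) :=
        hconn_trans pfj (hceq ▸ hconn_symm pfk)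
      have hlow := low _ _ _ tj tkM w
      have hsub : k * (D + 1) - j * (D + 1) = (k - j) * (D + 1) :=
        (Nat.sub_mul k j (D + 1)).symm
      rw [hsub] at hlow
      rcases eq_or_lt_of_le (show j + 1 ≤ k from hlt) with hk1 | hk2
      · have hpp := pp j (by omega)
        rw [hk1] at hpp
        have hone : (k - j) * (D + 1) = D + 1 := by
          rw [show k - j = 1 by omega, one_mul]
        omega
      · have h2 : 2 * (D + 1) ≤ (k - j) * (D + 1) :=
          Nat.mul_le_mul_right _ (by omega)
        omega
    have hcard : e.card < (Finset.range (r + 1)).card := by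
      rw [hu e he, Finset.card_range]
      omega
    obtain ⟨j, hjm, k, hkm, hjk, hcjk⟩ :=
      Finset.exists_ne_map_eq_of_card_lt_of_maps_to hcard
        (fun j hjm => (prop j (Nat.lt_succ_iff.1 (Finset.mem_range.1 hjm))).1)
    have hjr : j ≤ r := Nat.lt_succ_iff.1 (Finset.mem_range.1 hjm)
    have hkr : k ≤ r := Nat.lt_succ_iff.1 (Finset.mem_range.1 hkm)
    rcases lt_or_gt_of_ne hjk with h | h
    · exact main j k h hkr hcjk
    · exact main k j h hjr hcjk.symm
  have hne : {d | ∃ u v : Fin n, hdist E' u v = d}.Nonempty :=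
    ⟨hdist E' ⟨0, hn⟩ ⟨0, hn⟩, ⟨0, hn⟩, ⟨0, hn⟩, rfl⟩
  show sSup {d | ∃ u v : Fin n, hdist E' u v = d} ≤ r * (D + 1)
  refine csSup_le hne ?_
  rintro d ⟨a, b, rfl⟩
  exact key a b
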